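/- Let m ≥ 1, r ≥ 0 and let a₁, …, a_r ∈ ℤ/m. Then the number of subsets U ⊆ {1, …, r} with Σ_{i ∈ U} a_i = 0 in ℤ/m (including the empty set) is at least 2^{⌊r/m⌋}. -/
import Mathlib


/-- For `m ≥ 1`, `r ≥ 0` and `a₁, …, a_r ∈ ZMod m`, the number of subsets
`U ⊆ {1, …, r}` with `∑_{i ∈ U} a_i = 0` in `ℤ/m` (including the empty set) is at least
`2^⌊r/m⌋`. -/
theorem stmt6 (m r : ℕ) (hm : 1 ≤ m) (a : Fin r → ZMod m) :
    2 ^ (r / m) ≤ (Finset.univ.filter fun U : Finset (Fin r) => ∑ i ∈ U, a i = 0).card := by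
  haveI : NeZero m := ⟨by omega⟩
  set n := r / m with hn
  -- partial sums
  set s : ℕ → ZMod m := fun k => ∑ x ∈ Finset.univ.filter (fun x : Fin r => x.val < k), a x
    with hs
  -- for each block, a nonempty zero-sum subset inside the block
  have key : ∀ t : Fin n, ∃ B : Finset (Fin r), B.Nonempty ∧ (∑ x ∈ B, a x = 0) ∧
      ∀ x ∈ B, t.val * m ≤ x.val ∧ x.val < t.val * m + m := by
    intro t
    have hblock : t.val * m + m ≤ r := by
      have h1 : t.val + 1 ≤ n := t.isLt
      have := Nat.div_mul_le_self r m
      calc t.val * m + m = (t.val + 1) * m := by ring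
        _ ≤ n * m := Nat.mul_le_mul_right m h1
        _ ≤ r := by rw [hn]; exact Nat.div_mul_le_self r m
    obtain ⟨i, hi, j, hj, hij, hsij⟩ := Finset.exists_ne_map_eq_of_card_lt_of_maps_to
      (s := Finset.Icc (t.val * m) (t.val * m + m)) (t := (Finset.univ : Finset (ZMod m)))
      (by rw [Finset.card_univ, ZMod.card, Nat.card_Icc]; omega)
      (fun x _ => Finset.mem_univ (s x))
    simp only [Finset.mem_Icc] at hi hj
    wlog hlt : i < j generalizing i j
    · exact this j i hij.symm hsij.symm hj hi (by omega)
    refine ⟨Finset.univ.filter (fun x : Fin r => i ≤ x.val ∧ x.val < j), ?_, ?_, ?_⟩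
    · exact ⟨⟨i, by omega⟩, by simp [hlt]⟩
    · have hsub : Finset.univ.filter (fun x : Fin r => x.val < i)
          ⊆ Finset.univ.filter (fun x : Fin r => x.val < j) := by
        intro x hx; simp only [Finset.mem_filter, Finset.mem_univ, true_and] at hx ⊢; omega
      have hdiff : Finset.univ.filter (fun x : Fin r => x.val < j) \
          Finset.univ.filter (fun x : Fin r => x.val < i)
          = Finset.univ.filter (fun x : Fin r => i ≤ x.val ∧ x.val < j) := by
        ext x; simp only [Finset.mem_sdiff, Finset.mem_filter, Finset.mem_univ, true_and]
        omega
      calc ∑ x ∈ Finset.univ.filter (fun x : Fin r => i ≤ x.val ∧ x.val < j), a x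
          = s j - s i := by rw [← hdiff, Finset.sum_sdiff_eq_sub hsub]
        _ = 0 := by rw [hsij, sub_self]
    · intro x hx; simp only [Finset.mem_filter] at hx; omega
  choose B hBne hBsum hBmem using key
  -- the blocks are pairwise disjoint
  have hdisj : ∀ t t' : Fin n, t ≠ t' → Disjoint (B t) (B t') := by
    intro t t' htt'
    rw [Finset.disjoint_left]
    intro x hx hx'
    have h1 := hBmem t x hx
    have h2 := hBmem t' x hx'
    exact htt' (Fin.ext (by
      have e1 : x.val / m = t.val := Nat.div_eq_of_lt_le (by omega) (by rw [add_mul]; omega)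
      have e2 : x.val / m = t'.val := Nat.div_eq_of_lt_le (by omega) (by rw [add_mul]; omega)
      omega))
  -- injective map from subsets of Fin n
  have hinj : Set.InjOn (fun S : Finset (Fin n) => S.biUnion B) ↑(Finset.univ : Finset (Finset (Fin n))) := by
    intro S _ S' _ hSS0
    have hSS' : S.biUnion B = S'.biUnion B := hSS0
    by_contra hne
    rcases Finset.not_subset.1 (fun h => hne (Finset.Subset.antisymm h (by
        intro t ht
        by_contra ht'
        obtain ⟨x, hx⟩ := hBne t
        have hx1 : x ∈ S'.biUnion B := Finset.mem_biUnion.2 ⟨t, ht, hx⟩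
        rw [← hSS'] at hx1
        obtain ⟨u, hu, hxu⟩ := Finset.mem_biUnion.1 hx1
        rcases eq_or_ne u t with rfl | hut
        · exact ht' hu
        · exact (Finset.disjoint_left.1 (hdisj u t hut) hxu) hx))) with ⟨t, ht, ht'⟩
    obtain ⟨x, hx⟩ := hBne t
    have hx1 : x ∈ S.biUnion B := Finset.mem_biUnion.2 ⟨t, ht, hx⟩
    rw [hSS'] at hx1
    obtain ⟨u, hu, hxu⟩ := Finset.mem_biUnion.1 hx1
    rcases eq_or_ne u t with rfl | hut
    · exact ht' hu
    · exact (Finset.disjoint_left.1 (hdisj u t hut) hxu) hx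
  have hmaps : ∀ S : Finset (Fin n), (S.biUnion B) ∈
      (Finset.univ.filter fun U : Finset (Fin r) => ∑ i ∈ U, a i = 0) := by
    intro S
    simp only [Finset.mem_filter, Finset.mem_univ, true_and]
    rw [Finset.sum_biUnion (fun t _ t' _ h => hdisj t t' h)]
    exact Finset.sum_eq_zero fun t _ => hBsum t
  calc 2 ^ n = (Finset.univ : Finset (Finset (Fin n))).card := by
        simp [Finset.card_univ]
    _ ≤ _ := Finset.card_le_card_of_injOn _ (fun S _ => hmaps S) hinj
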